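/- Fix integers e > r ≥ 2. Let μ = (μ₁,...,μ_r) be a weak composition of w with μ₁ ≥ 1 and μ₁ ≠ μ_r + 1, and consider beta numbers β_t = μ_t·e + (e − r + t − 1). Let μσ₀ = (μ_r + 1, μ₂, ..., μ_{r−1}, μ₁ − 1) and β'_t the corresponding beta numbers. Then the level-e Shi coefficients ⌊(β_x − β_y)/e⌋ (over the sorted sequences, for all pairs x < y) computed from β and β' agree for all pairs except exactly one, for which they differ by exactly 1. -/

import Mathlib

private lemma fdiv_interval (e q c : ℤ) (h0 : 0 ≤ c) (h1 : c < e) :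
    (q * e + c).fdiv e = q := by
  have he : 0 < e := lt_of_le_of_lt h0 h1
  rw [Int.fdiv_eq_ediv_of_nonneg _ he.le, add_comm, Int.add_mul_ediv_right _ _ he.ne',
    Int.ediv_eq_zero_of_lt h0 h1, zero_add]

private lemma fdiv_pair (e qa qb ca cb : ℤ) (h1a : ca < e)
    (h0b : 0 ≤ cb) (h0a : 0 ≤ ca) (h1b : cb < e) :
    ((qa * e + ca) - (qb * e + cb)).fdiv e
      = qa - qb - (if ca < cb then 1 else 0) := by
  by_cases h : ca < cb
  · have hh : (qa*e+ca) - (qb*e+cb) = (qa - qb - 1) * e + (e + ca - cb) := by ring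
    rw [hh, fdiv_interval _ _ _ (by omega) (by omega), if_pos h]
  · have hh : (qa*e+ca) - (qb*e+cb) = (qa - qb) * e + (ca - cb) := by ring
    rw [hh, fdiv_interval _ _ _ (by omega) (by omega), if_neg h]
    ring

private lemma K_formula (e qa ca qb cb : ℕ) (ha : ca < e) (hb : cb < e) :
    (((qa * e + ca : ℕ) : ℤ) - ((qb * e + cb : ℕ) : ℤ)).fdiv e
      = (qa : ℤ) - qb - (if ca < cb then 1 else 0) := by
  have h := fdiv_pair (e : ℤ) qa qb ca cb (by exact_mod_cast ha) (by positivity)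
    (by positivity) (by exact_mod_cast hb)
  push_cast
  rw [h]
  congr 1
  simp [Nat.cast_lt]

private lemma nat_decomp_inj (e a b c d : ℕ) (hc : c < e) (hd : d < e)
    (h : a * e + c = b * e + d) : a = b ∧ c = d := by
  have he : 0 < e := by omega
  have ha : (c + a * e) / e = a := by
    rw [Nat.add_mul_div_right _ _ he, Nat.div_eq_of_lt hc, zero_add]
  have hb' : (d + b * e) / e = b := by
    rw [Nat.add_mul_div_right _ _ he, Nat.div_eq_of_lt hd, zero_add]
  have hab : a = b := by rw [← ha, ← hb']; congr 1; omega
  subst hab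
  exact ⟨rfl, by omega⟩

private lemma map_sort_eq (M : Multiset ℕ) (g : ℕ → ℕ) (hM : M.Nodup)
    (hg : ∀ a ∈ M, ∀ b ∈ M, a < b → g a < g b) :
    (M.map g).sort (· ≤ ·) = (M.sort (· ≤ ·)).map g := by
  have hnd : (M.sort (· ≤ ·)).Nodup := by
    rw [← Multiset.coe_nodup, Multiset.sort_eq]; exact hM
  have hs : (M.sort (· ≤ ·)).Pairwise (· ≤ ·) := Multiset.pairwise_sort _ _
  have hlt : (M.sort (· ≤ ·)).Pairwise (· < ·) := (hs.and hnd).imp fun h => lt_of_le_of_ne h.1 h.2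
  have hglt : (M.sort (· ≤ ·)).Pairwise (fun a b => g a < g b) := by
    refine List.Pairwise.imp_of_mem ?_ hlt
    intro a b ha hb hab
    exact hg a (Multiset.mem_sort _ |>.mp ha) b (Multiset.mem_sort _ |>.mp hb) hab
  refine (fun hp h1 h2 => List.Perm.eq_of_pairwise' (r := (· ≤ ·)) h1 h2 hp) ?_ ?_ ?_
  · apply Multiset.coe_eq_coe.mp
    rw [Multiset.sort_eq]
    change _ = Multiset.map g ↑(M.sort (· ≤ ·))
    rw [Multiset.sort_eq]
  · exact Multiset.pairwise_sort _ _
  · exact List.Pairwise.imp le_of_lt (List.pairwise_map.mpr hglt)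

/-- For a weak composition μ of w of length r, the beta numbers
β_t = μ_t·e + (e − r + t − 1) (1 ≤ t ≤ r; here 0-based t with residue
e − r + t), sorted in decreasing order. -/
def sortedBetasDesc (e r : ℕ) (μ : ℕ → ℕ) : List ℕ :=
  ((((Finset.range r).val.map (fun t => μ t * e + (e - r + t))).sort
    (· ≤ ·))).reverse

/-- Crossing the wall corresponding to the affine simple reflection σ₀:
for μσ₀ = (μ_r + 1, μ₂, …, μ_{r−1}, μ₁ − 1), the Shi coefficient vectors of
the alcoves labelled by μ and μσ₀ agree in all coordinates except exactly one,
where they differ by exactly 1. -/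
theorem wall_crossing_affine_reflection (e r w : ℕ) (hr : 2 ≤ r)
    (hre : r < e) (μ : ℕ → ℕ) (hμ : ∑ t ∈ Finset.range r, μ t = w)
    (hpos : 1 ≤ μ 0) (hne : μ 0 ≠ μ (r - 1) + 1) :
    let μ' : ℕ → ℕ := fun t =>
      if t = 0 then μ (r - 1) + 1 else if t = r - 1 then μ 0 - 1 else μ t
    let l := sortedBetasDesc e r μ
    let l' := sortedBetasDesc e r μ'
    let K : ℕ → ℕ → ℤ := fun x y => ((l.getD x 0 : ℤ) - (l.getD y 0 : ℤ)).fdiv e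
    let K' : ℕ → ℕ → ℤ := fun x y =>
      ((l'.getD x 0 : ℤ) - (l'.getD y 0 : ℤ)).fdiv e
    ∃ x y, x < y ∧ y < r ∧
      (K x y = K' x y + 1 ∨ K' x y = K x y + 1) ∧
      ∀ x' y', x' < y' → y' < r → (x', y') ≠ (x, y) → K x' y' = K' x' y' := by
  intro μ' l l' K K'
  have he : 0 < e := by omega
  set f : ℕ → ℕ := fun t => μ t * e + (e - r + t) with hfdef
  set f' : ℕ → ℕ := fun t => μ' t * e + (e - r + t) with hf'def
  set M : Multiset ℕ := (Finset.range r).val.map f with hMdef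
  set g : ℕ → ℕ := fun n => if n = f 0 then (μ 0 - 1) * e + (e - 1)
    else if n = f (r-1) then (μ (r-1) + 1) * e + (e - r) else n with hgdef
  -- injectivity of f
  have hfinj : ∀ s, s < r → ∀ t, t < r → f s = f t → s = t := by
    intro s hs t ht h
    simp only [hfdef] at h
    have := nat_decomp_inj e (μ s) (μ t) (e - r + s) (e - r + t)
      (by omega) (by omega) h
    omega
  have hf0ne : f 0 ≠ f (r-1) := fun h => by
    have := hfinj 0 (by omega) (r-1) (by omega) h; omega
  -- values of g on f
  have hgf0 : g (f 0) = (μ 0 - 1) * e + (e - 1) := by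
    simp only [hgdef, if_pos rfl]
  have hgfr : g (f (r-1)) = (μ (r-1) + 1) * e + (e - r) := by
    simp only [hgdef]
    rw [if_neg (fun h => hf0ne h.symm)]
    simp
  have hgfm : ∀ t, t < r → t ≠ 0 → t ≠ r - 1 → g (f t) = f t := by
    intro t ht h0 h1
    simp only [hgdef]
    rw [if_neg (fun h => h0 (hfinj t ht 0 (by omega) h)),
      if_neg (fun h => h1 (hfinj t ht (r-1) (by omega) h))]
  -- values of μ'
  have hμ'0 : μ' 0 = μ (r-1) + 1 := by simp [μ']
  have hμ'r : μ' (r-1) = μ 0 - 1 := by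
    simp only [μ']; rw [if_neg (by omega)]; simp
  have hμ'm : ∀ t, t ≠ 0 → t ≠ r - 1 → μ' t = μ t := by
    intro t h0 h1; simp only [μ']; rw [if_neg h0, if_neg h1]
  -- product helpers
  have hsplit : ∀ a b : ℕ, a * e + e ≤ b * e ∨ b * e ≤ a * e := by
    intro a b
    rcases le_or_gt b a with h | h
    · exact Or.inr (Nat.mul_le_mul_right e h)
    · left
      calc a * e + e = (a + 1) * e := by ring
        _ ≤ b * e := Nat.mul_le_mul_right e (by omega)
  have hsub : (μ 0 - 1) * e + e = μ 0 * e := by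
    have h1 : μ 0 - 1 + 1 = μ 0 := by omega
    calc (μ 0 - 1) * e + e = (μ 0 - 1 + 1) * e := by ring
      _ = μ 0 * e := by rw [h1]
  have hadd : (μ (r-1) + 1) * e = μ (r-1) * e + e := by ring
  have hprod : μ 0 * e ≤ μ (r-1) * e ∨ μ (r-1) * e + 2 * e ≤ μ 0 * e := by
    rcases lt_trichotomy (μ 0) (μ (r-1) + 1) with h | h | h
    · exact Or.inl (Nat.mul_le_mul_right e (by omega))
    · exact absurd h hne
    · right
      calc μ (r-1) * e + 2 * e = (μ (r-1) + 2) * e := by ring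
        _ ≤ μ 0 * e := Nat.mul_le_mul_right e (by omega)
  -- strict monotonicity of g on M
  have hgmono : ∀ a ∈ M, ∀ b ∈ M, a < b → g a < g b := by
    intro a ha b hb hab
    rw [hMdef, Multiset.mem_map] at ha hb
    obtain ⟨s, hs, rfl⟩ := ha
    obtain ⟨t, ht, rfl⟩ := hb
    rw [Finset.mem_def.symm, Finset.mem_range] at hs ht
    by_cases hs0 : s = 0
    · subst hs0
      by_cases ht0 : t = 0
      · subst ht0; omega
      by_cases ht1 : t = r - 1
      · subst ht1
        rw [hgf0, hgfr]
        simp only [hfdef] at hab ⊢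
        rcases hprod with hp | hp <;> omega
      · rw [hgf0, hgfm t ht ht0 ht1]
        simp only [hfdef] at hab ⊢
        rcases hsplit (μ 0) (μ t) with hp | hp <;> omega
    by_cases hs1 : s = r - 1
    · subst hs1
      by_cases ht0 : t = 0
      · subst ht0
        rw [hgfr, hgf0]
        simp only [hfdef] at hab ⊢
        rcases hprod with hp | hp <;> omega
      by_cases ht1 : t = r - 1
      · subst ht1; omega
      · rw [hgfr, hgfm t ht ht0 ht1]
        simp only [hfdef] at hab ⊢
        rcases hsplit (μ (r-1)) (μ t) with hp | hp <;> omega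
    · -- s middle
      rw [hgfm s hs hs0 hs1]
      by_cases ht0 : t = 0
      · subst ht0
        rw [hgf0]
        simp only [hfdef] at hab ⊢
        rcases hsplit (μ s) (μ 0) with hp | hp <;> omega
      by_cases ht1 : t = r - 1
      · subst ht1
        rw [hgfr]
        simp only [hfdef] at hab ⊢
        omega
      · rw [hgfm t ht ht0 ht1]
        exact hab
  -- nodup
  have hMnodup : M.Nodup := by
    rw [hMdef]
    refine Multiset.Nodup.map_on ?_ (Finset.range r).nodup
    intro s hs t ht h
    rw [Finset.mem_def.symm, Finset.mem_range] at hs ht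
    exact hfinj s hs t ht h
  -- basic facts about l
  have hl : l = (M.sort (· ≤ ·)).reverse := rfl
  have hlcoe : (l : Multiset ℕ) = M := by
    rw [hl, Multiset.coe_reverse, Multiset.sort_eq]
  have hlen : l.length = r := by
    rw [hl, List.length_reverse, Multiset.length_sort, hMdef, Multiset.card_map]
    exact Finset.card_range r
  have hpair : l.Pairwise (fun a b => b < a) := by
    rw [hl, List.pairwise_reverse]
    have hnd : (M.sort (· ≤ ·)).Nodup := by
      rw [← Multiset.coe_nodup, Multiset.sort_eq]; exact hMnodup
    exact ((Multiset.pairwise_sort _ _).and hnd).imp fun h => lt_of_le_of_ne h.1 h.2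
  have hget : ∀ x, x < r → ∀ y, y < r → x < y → l.getD y 0 < l.getD x 0 := by
    intro x hx y hy hxy
    rw [List.getD_eq_getElem l 0 (by omega), List.getD_eq_getElem l 0 (by omega)]
    exact List.pairwise_iff_getElem.mp hpair x y (by omega) (by omega) hxy
  have hposinj : ∀ x, x < r → ∀ y, y < r → l.getD x 0 = l.getD y 0 → x = y := by
    intro x hx y hy hxy
    rcases lt_trichotomy x y with h | h | h
    · have := hget x hx y hy h; omega
    · exact h
    · have := hget y hy x hx h; omega
  have hmem : ∀ x, x < r → ∃ t, t < r ∧ l.getD x 0 = f t := by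
    intro x hx
    have h1 : l.getD x 0 ∈ l := by
      rw [List.getD_eq_getElem l 0 (by omega)]
      exact List.getElem_mem _
    have h2 : l.getD x 0 ∈ M := by
      rw [← hlcoe]; exact h1
    rw [hMdef, Multiset.mem_map] at h2
    obtain ⟨t, ht, h⟩ := h2
    rw [Finset.mem_def.symm, Finset.mem_range] at ht
    exact ⟨t, ht, h.symm⟩
  -- l' = l.map g
  have hM' : (Finset.range r).val.map f' = M.map g := by
    rw [hMdef, Multiset.map_map]
    have hnodup : ((Finset.range r).val).Nodup := (Finset.range r).nodup
    have h0 : (0 : ℕ) ∈ (Finset.range r).val := by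
      rw [Finset.mem_def.symm, Finset.mem_range]; omega
    have h1 : (r-1) ∈ ((Finset.range r).val).erase 0 := by
      rw [hnodup.mem_erase_iff]
      refine ⟨by omega, ?_⟩
      rw [Finset.mem_def.symm, Finset.mem_range]; omega
    obtain ⟨s, hs⟩ : ∃ s, (Finset.range r).val = 0 ::ₘ (r-1) ::ₘ s :=
      ⟨(((Finset.range r).val.erase 0).erase (r-1)),
        by rw [Multiset.cons_erase h1, Multiset.cons_erase h0]⟩
    have hsnodup : (0 ::ₘ (r-1) ::ₘ s).Nodup := hs ▸ hnodup
    rw [Multiset.nodup_cons] at hsnodup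
    obtain ⟨h0nm, hsnodup⟩ := hsnodup
    rw [Multiset.nodup_cons] at hsnodup
    obtain ⟨h1nm, _⟩ := hsnodup
    have hsmem : ∀ t ∈ s, t < r ∧ t ≠ 0 ∧ t ≠ r - 1 := by
      intro t hts
      have htr : t ∈ (Finset.range r).val := by
        rw [hs]; exact Multiset.mem_cons_of_mem (Multiset.mem_cons_of_mem hts)
      rw [Finset.mem_def.symm, Finset.mem_range] at htr
      refine ⟨htr, ?_, ?_⟩
      · rintro rfl; exact h0nm (Multiset.mem_cons_of_mem hts)
      · rintro rfl; exact h1nm hts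
    rw [hs]
    simp only [Multiset.map_cons]
    have e1 : f' 0 = (g ∘ f) (r-1) := by
      simp only [Function.comp, hgfr, hf'def, hμ'0]
      omega
    have e2 : f' (r-1) = (g ∘ f) 0 := by
      simp only [Function.comp, hgf0, hf'def, hμ'r]
      omega
    have e3 : s.map f' = s.map (g ∘ f) := by
      apply Multiset.map_congr rfl
      intro t hts
      obtain ⟨htr, ht0, ht1⟩ := hsmem t hts
      simp only [Function.comp, hgfm t htr ht0 ht1, hf'def, hfdef, hμ'm t ht0 ht1]
      exact (hgfm t htr ht0 ht1).symm
    rw [e1, e2, e3, Multiset.cons_swap]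
  have hl'map : l' = l.map g := by
    have hl'0 : l' = (((Finset.range r).val.map f').sort (· ≤ ·)).reverse := rfl
    rw [hl'0, hM', map_sort_eq M g hMnodup hgmono, hl, List.map_reverse]
  have hget' : ∀ x, x < r → l'.getD x 0 = g (l.getD x 0) := by
    intro x hx
    rw [hl'map, List.getD_eq_getElem _ 0 (by rw [List.length_map]; omega),
      List.getElem_map, ← List.getD_eq_getElem l 0 (by omega)]
  -- positions of the two special betas
  have hf0mem : f 0 ∈ l := by
    rw [← Multiset.mem_coe, hlcoe, hMdef]
    exact Multiset.mem_map_of_mem f (by rw [Finset.mem_def.symm, Finset.mem_range]; omega)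
  have hfrmem : f (r-1) ∈ l := by
    rw [← Multiset.mem_coe, hlcoe, hMdef]
    exact Multiset.mem_map_of_mem f (by rw [Finset.mem_def.symm, Finset.mem_range]; omega)
  set x0 := l.idxOf (f 0) with hx0def
  set y0 := l.idxOf (f (r-1)) with hy0def
  have hx0r : x0 < r := by
    rw [← hlen]; exact List.idxOf_lt_length_iff.mpr hf0mem
  have hy0r : y0 < r := by
    rw [← hlen]; exact List.idxOf_lt_length_iff.mpr hfrmem
  have hgx0 : l.getD x0 0 = f 0 := by
    rw [List.getD_eq_getElem l 0 (by omega)]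
    exact List.getElem_idxOf _
  have hgy0 : l.getD y0 0 = f (r-1) := by
    rw [List.getD_eq_getElem l 0 (by omega)]
    exact List.getElem_idxOf _
  -- the main agreement statement
  have main : ∀ x' y', x' < y' → y' < r →
      ¬(l.getD x' 0 = f 0 ∧ l.getD y' 0 = f (r-1)) →
      ¬(l.getD x' 0 = f (r-1) ∧ l.getD y' 0 = f 0) →
      K x' y' = K' x' y' := by
    intro x' y' hxy' hy'r hex1 hex2
    obtain ⟨ta, hta, hfa⟩ := hmem x' (by omega)
    obtain ⟨tb, htb, hfb⟩ := hmem y' hy'r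
    have hab : l.getD y' 0 < l.getD x' 0 := hget x' (by omega) y' hy'r hxy'
    have htab : ta ≠ tb := by
      rintro rfl
      rw [hfa, hfb] at hab
      omega
    show ((l.getD x' 0 : ℤ) - (l.getD y' 0 : ℤ)).fdiv e
        = ((l'.getD x' 0 : ℤ) - (l'.getD y' 0 : ℤ)).fdiv e
    rw [hget' x' (by omega), hget' y' hy'r, hfa, hfb]
    by_cases ha0 : ta = 0
    · subst ha0
      by_cases hb1 : tb = r - 1
      · exact absurd ⟨hfa, hb1 ▸ hfb⟩ hex1
      have hb0 : tb ≠ 0 := fun h => htab (h ▸ rfl)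
      rw [hgf0, hgfm tb htb hb0 hb1]
      simp only [hfdef]
      rw [K_formula e (μ 0) (e - r + 0) (μ tb) (e - r + tb) (by omega) (by omega),
        K_formula e (μ 0 - 1) (e - 1) (μ tb) (e - r + tb) (by omega) (by omega)]
      split_ifs <;> omega
    by_cases ha1 : ta = r - 1
    · subst ha1
      by_cases hb0 : tb = 0
      · exact absurd ⟨hfa, hb0 ▸ hfb⟩ hex2
      have hb1 : tb ≠ r - 1 := fun h => htab (h ▸ rfl)
      rw [hgfr, hgfm tb htb hb0 hb1]
      simp only [hfdef]
      rw [K_formula e (μ (r-1)) (e - r + (r-1)) (μ tb) (e - r + tb) (by omega) (by omega),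
        K_formula e (μ (r-1) + 1) (e - r) (μ tb) (e - r + tb) (by omega) (by omega)]
      split_ifs <;> omega
    · rw [hgfm ta hta ha0 ha1]
      by_cases hb0 : tb = 0
      · subst hb0
        rw [hgf0]
        simp only [hfdef]
        rw [K_formula e (μ ta) (e - r + ta) (μ 0) (e - r + 0) (by omega) (by omega),
          K_formula e (μ ta) (e - r + ta) (μ 0 - 1) (e - 1) (by omega) (by omega)]
        split_ifs <;> omega
      by_cases hb1 : tb = r - 1
      · subst hb1
        rw [hgfr]
        simp only [hfdef]
        rw [K_formula e (μ ta) (e - r + ta) (μ (r-1)) (e - r + (r-1)) (by omega) (by omega),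
          K_formula e (μ ta) (e - r + ta) (μ (r-1) + 1) (e - r) (by omega) (by omega)]
        split_ifs <;> omega
      · rw [hgfm tb htb hb0 hb1]
  -- now split on which special beta is larger
  rcases hprod with hp | hp
  · -- μ 0 ≤ μ (r-1) : f 0 < f (r-1), changed pair is (y0, x0)
    have horder : f 0 < f (r-1) := by
      simp only [hfdef]; omega
    have hy0x0 : y0 < x0 := by
      rcases lt_trichotomy y0 x0 with h | h | h
      · exact h
      · exfalso; apply hf0ne; rw [← hgx0, ← hgy0, h]
      · have := hget x0 hx0r y0 hy0r h
        rw [hgx0, hgy0] at this; omega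
    refine ⟨y0, x0, hy0x0, hx0r, Or.inr ?_, ?_⟩
    · show ((l'.getD y0 0 : ℤ) - (l'.getD x0 0 : ℤ)).fdiv e
          = ((l.getD y0 0 : ℤ) - (l.getD x0 0 : ℤ)).fdiv e + 1
      rw [hget' y0 hy0r, hget' x0 hx0r, hgx0, hgy0, hgf0, hgfr]
      simp only [hfdef]
      rw [K_formula e (μ (r-1) + 1) (e - r) (μ 0 - 1) (e - 1) (by omega) (by omega),
        K_formula e (μ (r-1)) (e - r + (r-1)) (μ 0) (e - r + 0) (by omega) (by omega)]
      split_ifs <;> omega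
    · intro x' y' hxy' hy'r hne'
      refine main x' y' hxy' hy'r ?_ ?_
      · rintro ⟨hA, hB⟩
        have := hget x' (by omega) y' hy'r hxy'
        rw [hA, hB] at this
        omega
      · rintro ⟨hA, hB⟩
        have hxx : x' = y0 := hposinj x' (by omega) y0 hy0r (by rw [hA, hgy0])
        have hyy : y' = x0 := hposinj y' hy'r x0 hx0r (by rw [hB, hgx0])
        exact hne' (by rw [hxx, hyy])
  · -- μ (r-1) + 2 ≤ μ 0 : f (r-1) < f 0, changed pair is (x0, y0)
    have horder : f (r-1) < f 0 := by
      simp only [hfdef]; omega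
    have hx0y0 : x0 < y0 := by
      rcases lt_trichotomy x0 y0 with h | h | h
      · exact h
      · exfalso; apply hf0ne; rw [← hgx0, ← hgy0, h]
      · have := hget y0 hy0r x0 hx0r h
        rw [hgx0, hgy0] at this; omega
    refine ⟨x0, y0, hx0y0, hy0r, Or.inl ?_, ?_⟩
    · show ((l.getD x0 0 : ℤ) - (l.getD y0 0 : ℤ)).fdiv e
          = ((l'.getD x0 0 : ℤ) - (l'.getD y0 0 : ℤ)).fdiv e + 1
      rw [hget' x0 hx0r, hget' y0 hy0r, hgx0, hgy0, hgf0, hgfr]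
      simp only [hfdef]
      rw [K_formula e (μ 0) (e - r + 0) (μ (r-1)) (e - r + (r-1)) (by omega) (by omega),
        K_formula e (μ 0 - 1) (e - 1) (μ (r-1) + 1) (e - r) (by omega) (by omega)]
      split_ifs <;> omega
    · intro x' y' hxy' hy'r hne'
      refine main x' y' hxy' hy'r ?_ ?_
      · rintro ⟨hA, hB⟩
        have hxx : x' = x0 := hposinj x' (by omega) x0 hx0r (by rw [hA, hgx0])
        have hyy : y' = y0 := hposinj y' hy'r y0 hy0r (by rw [hB, hgy0])
        exact hne' (by rw [hxx, hyy])
      · rintro ⟨hA, hB⟩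
        have := hget x' (by omega) y' hy'r hxy'
        rw [hA, hB] at this
        omega
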